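/- Let G be a finite abelian group with |G| ≥ 3. Then BO(|G|−2, G) = |G|−2 if |G| is odd; BO(|G|−2, G) = |G|+1 if exp(G) = 2 or |G| = 4; and BO(|G|−2, G) = |G|−1 otherwise. -/

import Mathlib

/-- A finset `S` of an abelian group is `k`-barycentric if it has `k` elements
and the sum of its elements equals `k • g` for some `g ∈ S`. -/
def IsBarycentric {G : Type*} [AddCommGroup G] (k : ℕ) (S : Finset G) : Prop :=
  S.card = k ∧ ∃ g ∈ S, ∑ x ∈ S, x = k • g

/-- The `k`-th barycentric Olson constant: the smallest `ℓ` such that every subset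
of `G` with at least `ℓ` elements contains a `k`-barycentric subset. -/
noncomputable def BO (k : ℕ) (G : Type*) [AddCommGroup G] [Fintype G] : ℕ :=
  sInf {ℓ : ℕ | ∀ A : Finset G, ℓ ≤ A.card → ∃ B ⊆ A, IsBarycentric k B}

/-- The 2-rank of a finite abelian group `G`: the number of invariant factors of `G`
divisible by 2, equivalently `log₂` of the number of solutions of `2 • g = 0`. -/
noncomputable def twoRank (G : Type*) [AddCommGroup G] : ℕ :=
  Nat.log 2 (Nat.card {g : G // 2 • g = 0})

section Aux
variable {G : Type*} [AddCommGroup G] [Fintype G]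

lemma sum_univ_self_neg : (∑ x : G, x) + (∑ x : G, x) = 0 := by
  have h : (∑ x : G, -x) = ∑ x : G, x :=
    Fintype.sum_equiv (Equiv.neg G) _ _ (fun x => rfl)
  calc (∑ x : G, x) + (∑ x : G, x) = (∑ x : G, x) + ∑ x : G, -x := by rw [h]
    _ = ∑ x : G, (x + -x) := (Finset.sum_add_distrib).symm
    _ = 0 := by simp

lemma order_dvd_two_eq_zero (h : Odd (Fintype.card G)) {x : G} (hx : x + x = 0) : x = 0 := by
  have h2 : addOrderOf x ∣ 2 := by
    rw [addOrderOf_dvd_iff_nsmul_eq_zero, two_nsmul]; exact hx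
  have hn : addOrderOf x ∣ Fintype.card G := addOrderOf_dvd_card
  rcases (Nat.dvd_prime Nat.prime_two).1 h2 with h1 | h1
  · exact AddMonoid.addOrderOf_eq_one_iff.mp h1
  · exfalso; rw [h1] at hn; rw [Nat.odd_iff] at h; omega

lemma sum_univ_odd (h : Odd (Fintype.card G)) : (∑ x : G, x) = 0 :=
  order_dvd_two_eq_zero h sum_univ_self_neg

lemma doubling_bij (h : Odd (Fintype.card G)) : Function.Bijective (fun g : G => g + g) := by
  rw [← Finite.injective_iff_bijective]
  intro x y hxy
  simp only at hxy
  have h0 : (x - y) + (x - y) = 0 := by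
    have : x + x - (y + y) = 0 := by rw [hxy]; abel
    rw [← this]; abel
  have := order_dvd_two_eq_zero h h0
  rwa [sub_eq_zero] at this

variable [DecidableEq G]

lemma sum_invariant (h2 : ∀ x : G, x + x = 0) {t : G} (ht : t ≠ 0) :
    ∀ S : Finset G, (∀ x ∈ S, x + t ∈ S) → ∃ m, (∑ x ∈ S, x) = m • t ∧ S.card = 2 * m := by
  intro S
  induction S using Finset.strongInduction with
  | _ S ih =>
    intro hinv
    rcases S.eq_empty_or_nonempty with rfl | ⟨x, hx⟩
    · exact ⟨0, by simp, by simp⟩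
    · have hxt : x + t ∈ S := hinv x hx
      have hne : x ≠ x + t := fun h => ht (by rwa [left_eq_add] at h)
      have hsub : {x, x + t} ⊆ S := by
        intro y hy; rcases Finset.mem_insert.1 hy with rfl | hy
        · exact hx
        · rw [Finset.mem_singleton.1 hy]; exact hxt
      have hS'inv : ∀ y ∈ S \ {x, x + t}, y + t ∈ S \ {x, x + t} := by
        intro y hy
        rw [Finset.mem_sdiff] at hy ⊢
        refine ⟨hinv y hy.1, ?_⟩
        intro hmem
        apply hy.2
        rcases Finset.mem_insert.1 hmem with h | h
        · have : y = x + t := by rw [← h, add_assoc, h2, add_zero]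
          rw [Finset.mem_insert, Finset.mem_singleton]; tauto
        · rw [Finset.mem_singleton] at h
          have : y = x := add_right_cancel h
          rw [Finset.mem_insert]; tauto
      have hss : S \ {x, x + t} ⊂ S := Finset.sdiff_ssubset hsub (by simp)
      obtain ⟨m, hsum, hcard⟩ := ih _ hss hS'inv
      refine ⟨m + 1, ?_, ?_⟩
      · have hsd := Finset.sum_sdiff hsub (f := id)
        simp only [id] at hsd
        have hpair : ∑ y ∈ ({x, x + t} : Finset G), y = t := by
          rw [Finset.sum_pair hne, ← add_assoc, h2, zero_add]
        rw [← hsd, hsum, hpair, succ_nsmul]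
      · have hcs := Finset.card_sdiff_of_subset hsub
        have hc2 : ({x, x + t} : Finset G).card = 2 := Finset.card_pair hne
        have hle := Finset.card_le_card hsub
        omega

lemma sum_univ_exp_two (h2 : ∀ x : G, x + x = 0) (hG : 3 ≤ Fintype.card G) :
    (∑ x : G, x) = 0 := by
  have hnt : Nontrivial G := Fintype.one_lt_card_iff_nontrivial.mp (by omega)
  obtain ⟨t, ht⟩ := exists_ne (0 : G)
  obtain ⟨s, hs⟩ : ∃ s : G, s ∉ ({0, t} : Finset G) := by
    by_contra hall
    push_neg at hall
    have h1 : (Finset.univ : Finset G) ⊆ {0, t} := fun y _ => hall y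
    have h2' := Finset.card_le_card h1
    rw [Finset.card_univ] at h2'
    have : ({0, t} : Finset G).card ≤ 2 := Finset.card_insert_le _ _ |>.trans (by simp)
    omega
  rw [Finset.mem_insert, Finset.mem_singleton] at hs
  push_neg at hs
  have key : ∀ u : G, u ≠ 0 → (∑ x : G, x) = 0 ∨ (∑ x : G, x) = u := by
    intro u hu
    obtain ⟨m, hm, -⟩ := sum_invariant h2 hu Finset.univ (fun x _ => Finset.mem_univ _)
    have hdbl : ∀ j : ℕ, (j + j) • u = 0 := by
      intro j; rw [add_nsmul, ← nsmul_add, h2, smul_zero]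
    rcases Nat.even_or_odd m with ⟨j, hj⟩ | ⟨j, hj⟩
    · left; rw [hm, hj, hdbl]
    · right; rw [hm, hj, two_mul, add_nsmul, hdbl, one_nsmul, zero_add]
  rcases key t ht with h | h
  · exact h
  · rcases key s hs.1 with h' | h'
    · exact h'
    · exact absurd (h' ▸ h ▸ rfl) hs.2

lemma sum_of_compl_pair {B : Finset G} {a b : G} (hab : a ≠ b) (h : Bᶜ = {a, b}) :
    ∑ x ∈ B, x = (∑ x : G, x) - (a + b) := by
  have this := Finset.sum_compl_add_sum B (f := id)
  simp only [id] at this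
  rw [h, Finset.sum_pair hab] at this
  rw [eq_sub_iff_add_eq]
  rw [add_comm] at this
  exact this

lemma nsmul_card_sub_two (hG : 3 ≤ Fintype.card G) (g : G) :
    (Fintype.card G - 2) • g = -(g + g) := by
  have h0 : Fintype.card G • g = 0 := card_nsmul_eq_zero
  have h1 : (Fintype.card G - 2) • g + 2 • g = Fintype.card G • g := by
    rw [← add_nsmul]; congr 1; omega
  rw [h0, two_nsmul] at h1
  exact eq_neg_of_add_eq_zero_left h1

lemma mem_of_compl_pair {B : Finset G} {a b : G} (h : Bᶜ = {a, b}) {g : G} :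
    g ∈ B ↔ g ≠ a ∧ g ≠ b := by
  have h1 : g ∈ B ↔ g ∉ Bᶜ := by simp [Finset.mem_compl]
  rw [h1, h, Finset.mem_insert, Finset.mem_singleton]
  tauto

lemma compl_pair (hG : 3 ≤ Fintype.card G) {B : Finset G}
    (hB : B.card = Fintype.card G - 2) :
    ∃ a b : G, a ≠ b ∧ Bᶜ = {a, b} := by
  have hc : Bᶜ.card = 2 := by
    rw [Finset.card_compl, hB]; omega
  obtain ⟨a, b, hab, h⟩ := Finset.card_eq_two.1 hc
  exact ⟨a, b, hab, h⟩

lemma bary_char (hG : 3 ≤ Fintype.card G) {B : Finset G} {a b : G} (hab : a ≠ b)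
    (h : Bᶜ = {a, b}) (hB : B.card = Fintype.card G - 2) :
    IsBarycentric (Fintype.card G - 2) B ↔ ∃ g ∈ B, g + g = (a + b) - ∑ x : G, x := by
  constructor
  · rintro ⟨-, g, hg, hsum⟩
    refine ⟨g, hg, ?_⟩
    rw [sum_of_compl_pair hab h, nsmul_card_sub_two hG] at hsum
    have h2 := congrArg Neg.neg hsum
    rw [neg_neg] at h2
    rw [← h2]; abel
  · rintro ⟨g, hg, hgg⟩
    refine ⟨hB, g, hg, ?_⟩
    rw [sum_of_compl_pair hab h, nsmul_card_sub_two hG, hgg]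
    abel

lemma BO_eq_of (k m : ℕ)
    (hmem : ∀ A : Finset G, m ≤ A.card → ∃ B ⊆ A, IsBarycentric k B)
    (hlow : ∀ j, j < m → ∃ A : Finset G, j ≤ A.card ∧ ∀ B ⊆ A, ¬ IsBarycentric k B) :
    BO k G = m := by
  have hm' : m ∈ {ℓ : ℕ | ∀ A : Finset G, ℓ ≤ A.card → ∃ B ⊆ A, IsBarycentric k B} := hmem
  unfold BO
  apply le_antisymm
  · exact Nat.sInf_le hm'
  · apply le_csInf ⟨m, hm'⟩
    intro ℓ hℓ
    by_contra hlt
    push_neg at hlt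
    obtain ⟨A, hA, hno⟩ := hlow ℓ hlt
    obtain ⟨B, hBA, hB⟩ := hℓ A hA
    exact hno B hBA hB

end Aux

theorem BO_card_sub_two (G : Type*) [AddCommGroup G] [Fintype G]
    (hG : 3 ≤ Fintype.card G) :
    (Odd (Fintype.card G) → BO (Fintype.card G - 2) G = Fintype.card G - 2) ∧
    (AddMonoid.exponent G = 2 ∨ Fintype.card G = 4 →
      BO (Fintype.card G - 2) G = Fintype.card G + 1) ∧
    (¬ Odd (Fintype.card G) → ¬ (AddMonoid.exponent G = 2 ∨ Fintype.card G = 4) →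
      BO (Fintype.card G - 2) G = Fintype.card G - 1) := by
  classical
  refine ⟨?_, ?_, ?_⟩
  -- Case 1: odd
  · intro hodd
    apply BO_eq_of
    · intro A hA
      obtain ⟨B, hBA, hBcard⟩ := Finset.exists_subset_card_eq hA
      refine ⟨B, hBA, ?_⟩
      obtain ⟨a, b, hab, hcomp⟩ := compl_pair hG hBcard
      rw [bary_char hG hab hcomp hBcard]
      obtain ⟨g, hg⟩ := (doubling_bij hodd).surjective (a + b)
      simp only at hg
      have hga : g ≠ a := by
        rintro rfl
        exact hab (by rwa [add_right_inj] at hg)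
      have hgb : g ≠ b := by
        rintro rfl
        exact hab ((add_left_inj g).1 hg.symm)
      exact ⟨g, (mem_of_compl_pair hcomp).2 ⟨hga, hgb⟩, by rw [sum_univ_odd hodd, sub_zero, hg]⟩
    · intro j hj
      obtain ⟨A, -, hAcard⟩ := Finset.exists_subset_card_eq
        (s := (Finset.univ : Finset G)) (n := Fintype.card G - 3)
        (by rw [Finset.card_univ]; omega)
      refine ⟨A, by omega, ?_⟩
      intro B hBA hbary
      have h1 := hbary.1
      have h2 := Finset.card_le_card hBA
      omega
  -- Case 2: exponent 2 or card 4
  · intro hcase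
    have hnobary : ∀ B : Finset G, ¬ IsBarycentric (Fintype.card G - 2) B := by
      intro B hbary
      rcases hcase with hexp | hn4
      · have h2 : ∀ x : G, x + x = 0 := by
          intro x
          have := AddMonoid.exponent_nsmul_eq_zero x
          rwa [hexp, two_nsmul] at this
        obtain ⟨a, b, hab, hcomp⟩ := compl_pair hG hbary.1
        obtain ⟨g, hgB, hgg⟩ := (bary_char hG hab hcomp hbary.1).1 hbary
        rw [sum_univ_exp_two h2 hG, sub_zero, h2] at hgg
        apply hab
        have : a + b = a + a := by rw [← hgg, h2]
        exact (add_right_inj a).1 this.symm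
      · have hk : Fintype.card G - 2 = 2 := by omega
        rw [hk] at hbary
        obtain ⟨hc2, g, hgB, hsum⟩ := hbary
        obtain ⟨x, y, hxy, hBxy⟩ := Finset.card_eq_two.1 hc2
        rw [hBxy, Finset.sum_pair hxy] at hsum
        rw [hBxy, Finset.mem_insert, Finset.mem_singleton] at hgB
        rw [two_nsmul] at hsum
        rcases hgB with rfl | rfl
        · exact hxy ((add_right_inj g).1 hsum).symm
        · exact hxy ((add_left_inj g).1 hsum)
    apply BO_eq_of
    · intro A hA
      exfalso
      have := Finset.card_le_univ A
      omega
    · intro j hj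
      refine ⟨Finset.univ, by rw [Finset.card_univ]; omega, fun B _ => hnobary B⟩
  -- Case 3
  · intro hodd hnot
    push_neg at hnot
    obtain ⟨hexp2, hn4⟩ := hnot
    rw [Nat.not_odd_iff_even] at hodd
    have hn6 : 6 ≤ Fintype.card G := by
      rcases hodd with ⟨m, hm⟩; omega
    haveI : Fact (Nat.Prime 2) := ⟨Nat.prime_two⟩
    obtain ⟨t, ht⟩ := exists_prime_addOrderOf_dvd_card (G := G) 2
      (by rcases hodd with ⟨m, hm⟩; omega)
    have ht0 : t ≠ 0 := by
      intro h; rw [h] at ht; simp at ht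
    have htt : t + t = 0 := by
      have := addOrderOf_nsmul_eq_zero t
      rwa [ht, two_nsmul] at this
    set σ : G := ∑ x : G, x with hσ
    have hσσ : σ + σ = 0 := sum_univ_self_neg
    -- torsion subgroup
    set T : AddSubgroup G := {
      carrier := {g : G | g + g = 0}
      zero_mem' := by simp
      add_mem' := by
        intro a b ha hb
        simp only [Set.mem_setOf_eq] at *
        calc a + b + (a + b) = (a + a) + (b + b) := by abel
          _ = 0 := by rw [ha, hb, add_zero]
      neg_mem' := by
        intro a ha
        simp only [Set.mem_setOf_eq] at *
        rw [← neg_add, ha, neg_zero] } with hT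
    have hTdvd : Nat.card T ∣ Fintype.card G := by
      have := AddSubgroup.card_addSubgroup_dvd_card T
      rwa [Nat.card_eq_fintype_card (α := G)] at this
    have hTne : T ≠ ⊤ := by
      intro hTop
      have hall : ∀ g : G, g + g = 0 := by
        intro g
        have hmem : g ∈ T := hTop ▸ AddSubgroup.mem_top g
        exact hmem
      have hdvd : AddMonoid.exponent G ∣ 2 := by
        rw [AddMonoid.exponent_dvd_iff_forall_nsmul_eq_zero]
        intro g; rw [two_nsmul]; exact hall g
      rcases (Nat.dvd_prime Nat.prime_two).1 hdvd with h1 | h1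
      · apply ht0
        have := AddMonoid.exponent_nsmul_eq_zero t
        rwa [h1, one_nsmul] at this
      · exact hexp2 h1
    have hTneq : Nat.card T ≠ Fintype.card G := by
      intro h
      exact hTne (AddSubgroup.eq_top_of_card_eq T (by rw [h, Nat.card_eq_fintype_card]))
    have hT2 : 2 * Nat.card T ≤ Fintype.card G := by
      obtain ⟨c, hc⟩ := hTdvd
      have hc0 : c ≠ 0 := by rintro rfl; omega
      have hc1 : c ≠ 1 := by rintro rfl; rw [mul_one] at hc; exact hTneq hc.symm
      calc 2 * Nat.card T = Nat.card T * 2 := by ring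
        _ ≤ Nat.card T * c := Nat.mul_le_mul_left _ (by omega)
        _ = Fintype.card G := hc.symm
    have hTcard : Nat.card T = (Finset.univ.filter (fun g : G => g + g = 0)).card := by
      rw [Nat.card_eq_fintype_card, ← Fintype.card_subtype]
      apply Fintype.card_congr
      exact Equiv.subtypeEquivRight (fun g => Iff.rfl)
    apply BO_eq_of
    -- membership: every A with card ≥ n-1 contains barycentric subset
    · intro A hA
      obtain ⟨A', hA'A, hA'⟩ := Finset.exists_subset_card_eq
        (show Fintype.card G - 1 ≤ A.card from hA)
      have hcA' : A'ᶜ.card = 1 := by rw [Finset.card_compl, hA']; omega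
      obtain ⟨c, hc⟩ := Finset.card_eq_one.1 hcA'
      set F : Finset G := Finset.univ.filter (fun g : G => g + g = c + c - σ) with hF
      have hfil : F.card ≤ Nat.card T := by
        rcases F.eq_empty_or_nonempty with he | ⟨g₀, hg₀⟩
        · rw [he]; simp
        · rw [hTcard]
          apply Finset.card_le_card_of_injOn (fun g => g - g₀)
          · intro g hg
            rw [hF, Finset.mem_coe, Finset.mem_filter] at hg
            have hg₀' := hg₀
            rw [hF, Finset.mem_filter] at hg₀'
            rw [Finset.mem_coe, Finset.mem_filter]
            refine ⟨Finset.mem_univ _, ?_⟩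
            calc (g - g₀) + (g - g₀) = (g + g) - (g₀ + g₀) := by abel
              _ = 0 := by rw [hg.2, hg₀'.2, sub_self]
          · intro x _ y _ hxy
            simpa [sub_left_inj] using hxy
      set Bad : Finset G := insert c (insert (c - σ) F) with hBad
      have hBadcard : Bad.card < Fintype.card G := by
        have h1 : Bad.card ≤ 2 + F.card := by
          calc Bad.card ≤ (insert (c - σ) F).card + 1 := Finset.card_insert_le _ _
            _ ≤ F.card + 1 + 1 := by
                have := Finset.card_insert_le (c - σ) F
                omega
            _ = 2 + F.card := by omega
        omega
      obtain ⟨g, hg⟩ : ∃ g : G, g ∉ Bad := by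
        by_contra hall
        push_neg at hall
        have hsub : (Finset.univ : Finset G) ⊆ Bad := fun y _ => hall y
        have := Finset.card_le_card hsub
        rw [Finset.card_univ] at this
        omega
      rw [hBad, Finset.mem_insert, Finset.mem_insert, hF, Finset.mem_filter] at hg
      push_neg at hg
      obtain ⟨hgc, hgcσ, hgfil⟩ := hg
      have hgfil' : g + g ≠ c + c - σ := fun h => hgfil (Finset.mem_univ g) h
      set b : G := g + g + σ - c with hb
      have hbc : b ≠ c := by
        intro h
        apply hgfil'
        rw [hb, sub_eq_iff_eq_add] at h
        rw [eq_sub_iff_add_eq]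
        exact h
      have hgb : g ≠ b := by
        intro h
        apply hgcσ
        rw [hb, eq_sub_iff_add_eq] at h
        rw [eq_sub_iff_add_eq]
        rw [add_assoc] at h
        exact ((add_right_inj g).1 h).symm ▸ rfl
      refine ⟨({c, b} : Finset G)ᶜ, ?_, ?_⟩
      · intro x hx
        rw [Finset.mem_compl, Finset.mem_insert, Finset.mem_singleton] at hx
        push_neg at hx
        have hxA' : x ∈ A' := by
          have hxc : x ∉ A'ᶜ := by rw [hc, Finset.mem_singleton]; exact hx.1
          rwa [Finset.mem_compl, not_not] at hxc
        exact hA'A hxA'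
      · have hcard : (({c, b} : Finset G)ᶜ).card = Fintype.card G - 2 := by
          rw [Finset.card_compl, Finset.card_pair (Ne.symm hbc)]
        rw [bary_char hG (Ne.symm hbc) (compl_compl _) hcard]
        refine ⟨g, ?_, ?_⟩
        · rw [Finset.mem_compl, Finset.mem_insert, Finset.mem_singleton]
          push_neg
          exact ⟨hgc, hgb⟩
        · rw [hb]; abel
    -- lower bound
    · intro j hj
      set R : AddSubgroup G := {
        carrier := Set.range (fun g : G => g + g)
        zero_mem' := ⟨0, by simp⟩
        add_mem' := by
          rintro a b ⟨x, hx⟩ ⟨y, hy⟩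
          exact ⟨x + y, by simp only at *; rw [← hx, ← hy]; abel⟩
        neg_mem' := by
          rintro a ⟨x, hx⟩
          exact ⟨-x, by simp only at *; rw [← hx]; abel⟩ } with hR
      have hRdvd : Nat.card R ∣ Fintype.card G := by
        have := AddSubgroup.card_addSubgroup_dvd_card R
        rwa [Nat.card_eq_fintype_card (α := G)] at this
      have hRne : R ≠ ⊤ := by
        intro hTop
        have hsurj : Function.Surjective (fun g : G => g + g) := by
          intro d
          have hmem : d ∈ R := hTop ▸ AddSubgroup.mem_top d
          exact hmem
        have hinj := (Finite.injective_iff_surjective).2 hsurj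
        apply ht0
        apply hinj
        simp only
        rw [htt, add_zero]
      have hRneq : Nat.card R ≠ Fintype.card G := by
        intro h
        exact hRne (AddSubgroup.eq_top_of_card_eq R (by rw [h, Nat.card_eq_fintype_card]))
      have hR2 : 2 * Nat.card R ≤ Fintype.card G := by
        obtain ⟨c, hc⟩ := hRdvd
        have hc0 : c ≠ 0 := by rintro rfl; omega
        have hc1 : c ≠ 1 := by rintro rfl; rw [mul_one] at hc; exact hRneq hc.symm
        calc 2 * Nat.card R = Nat.card R * 2 := by ring
          _ ≤ Nat.card R * c := Nat.mul_le_mul_left _ (by omega)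
          _ = Fintype.card G := hc.symm
      have hRcard : Nat.card R = (Finset.univ.image (fun g : G => g + g)).card := by
        rw [Nat.card_eq_fintype_card,
          ← Fintype.card_coe (Finset.univ.image (fun g : G => g + g))]
        apply Fintype.card_congr
        apply Equiv.subtypeEquivRight
        intro d
        constructor
        · intro h
          have h' : d ∈ Set.range (fun g : G => g + g) := h
          obtain ⟨g, hg⟩ := h'
          exact Finset.mem_image.2 ⟨g, Finset.mem_univ g, hg⟩
        · intro h
          obtain ⟨g, -, hg⟩ := Finset.mem_image.1 h
          show d ∈ Set.range (fun g : G => g + g)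
          exact ⟨g, hg⟩
      obtain ⟨d, hd⟩ : ∃ d : G, d ∉ insert σ (Finset.univ.image (fun g : G => g + g)) := by
        by_contra hall
        push_neg at hall
        have hsub : (Finset.univ : Finset G) ⊆ insert σ (Finset.univ.image (fun g : G => g + g)) :=
          fun y _ => hall y
        have h1 := Finset.card_le_card hsub
        have h2 := Finset.card_insert_le σ (Finset.univ.image (fun g : G => g + g))
        rw [Finset.card_univ] at h1
        omega
      rw [Finset.mem_insert] at hd
      push_neg at hd
      obtain ⟨hdσ, hdim⟩ := hd
      set b : G := d + σ with hb
      have hb0 : b ≠ 0 := by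
        intro h
        apply hdσ
        rw [hb] at h
        have : d = -σ := eq_neg_of_add_eq_zero_left h
        rw [this]
        exact neg_eq_of_add_eq_zero_left hσσ
      refine ⟨({0, b} : Finset G)ᶜ, ?_, ?_⟩
      · have : (({0, b} : Finset G)ᶜ).card = Fintype.card G - 2 := by
          rw [Finset.card_compl, Finset.card_pair (Ne.symm hb0)]
        omega
      · intro B hBA hbary
        have hcardA : (({0, b} : Finset G)ᶜ).card = Fintype.card G - 2 := by
          rw [Finset.card_compl, Finset.card_pair (Ne.symm hb0)]
        have hBA' : B = ({0, b} : Finset G)ᶜ :=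
          Finset.eq_of_subset_of_card_le hBA (by rw [hcardA, hbary.1])
        subst hBA'
        obtain ⟨g, hgB, hgg⟩ := (bary_char hG (Ne.symm hb0) (compl_compl _) hcardA).1 hbary
        apply hdim
        rw [Finset.mem_image]
        refine ⟨g, Finset.mem_univ g, ?_⟩
        rw [hgg, hb]
        abel
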